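/- Let H be a finite strongly connected directed graph whose adjacency matrix N satisfies ρ(N) ≤ 1, where ρ denotes spectral radius. Then the set of infinite admissible sequences (one-sided infinite walks) in H is finite. -/

import Mathlib

open Filter ENNReal Topology
open scoped NNReal

attribute [local instance] Matrix.linftyOpNormedRing Matrix.linftyOpNormedAlgebra

private lemma exists_pow_pos_of_rtg (k : ℕ) (N : Matrix (Fin k) (Fin k) ℕ) (w v : Fin k)
    (h : Relation.ReflTransGen (fun a b : Fin k => 0 < N a b) w v) :
    ∃ n, 1 ≤ (N ^ n) w v := by
  induction h with
  | refl => exact ⟨0, by simp [Matrix.one_apply]⟩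
  | tail hab hbc ih =>
    rename_i b c
    obtain ⟨n, hn⟩ := ih
    refine ⟨n + 1, ?_⟩
    rw [pow_succ, Matrix.mul_apply]
    calc 1 ≤ (N ^ n) w b * N b c := Nat.one_le_iff_ne_zero.2 (by positivity)
    _ ≤ _ := Finset.single_le_sum (f := fun j => (N ^ n) w j * N j c)
        (fun _ _ => Nat.zero_le _) (Finset.mem_univ b)

private lemma pow_entry_le (k : ℕ) (N : Matrix (Fin k) (Fin k) ℕ) (a b : ℕ)
    (x y z : Fin k) : (N ^ a) x y * (N ^ b) y z ≤ (N ^ (a + b)) x z := by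
  rw [pow_add, Matrix.mul_apply]
  exact Finset.single_le_sum (f := fun j => (N ^ a) x j * (N ^ b) j z)
    (fun _ _ => Nat.zero_le _) (Finset.mem_univ y)

theorem finite_admissible_sequences_of_spectralRadius_le_one
    (k : ℕ) (N : Matrix (Fin k) (Fin k) ℕ)
    (hconn : ∀ v w : Fin k, Relation.ReflTransGen (fun a b : Fin k => 0 < N a b) v w)
    (hρ : spectralRadius ℂ (N.map (Nat.cast : ℕ → ℂ)) ≤ 1) :
    {f : ℕ → Fin k | ∀ m : ℕ, 0 < N (f m) (f (m + 1))}.Finite := by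
  -- Step 1: each vertex has at most one outgoing edge (with multiplicity)
  have key : ∀ v : Fin k, ∑ w, N v w ≤ 1 := by
    intro v
    by_contra hv
    push_neg at hv
    -- obtain L ≥ 1 with 2 ≤ (N^L) v v
    have hL : ∃ L, 1 ≤ L ∧ 2 ≤ (N ^ L) v v := by
      by_cases hbig : ∃ w, 2 ≤ N v w
      · obtain ⟨w, hw⟩ := hbig
        obtain ⟨n, hn⟩ := exists_pow_pos_of_rtg k N w v (hconn w v)
        refine ⟨1 + n, by omega, ?_⟩
        calc (2 : ℕ) = 2 * 1 := by ring
        _ ≤ N v w * (N ^ n) w v := Nat.mul_le_mul hw hn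
        _ = (N ^ 1) v w * (N ^ n) w v := by rw [pow_one]
        _ ≤ (N ^ (1 + n)) v v := pow_entry_le k N 1 n v w v
      · push_neg at hbig
        -- two distinct w₁ ≠ w₂ with positive entries
        have h2 : ∃ w₁ w₂, w₁ ≠ w₂ ∧ 1 ≤ N v w₁ ∧ 1 ≤ N v w₂ := by
          obtain ⟨w₁, -, hw₁⟩ := Finset.exists_ne_zero_of_sum_ne_zero
            (s := Finset.univ) (f := fun w => N v w) (show (∑ w, N v w) ≠ 0 by omega)
          have hsplit : N v w₁ + ∑ w ∈ Finset.univ.erase w₁, N v w = ∑ w, N v w :=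
            Finset.add_sum_erase Finset.univ (fun w => N v w) (Finset.mem_univ w₁)
          have hrest : 1 ≤ ∑ w ∈ Finset.univ.erase w₁, N v w := by
            have := hbig w₁; omega
          obtain ⟨w₂, hw₂mem, hw₂⟩ := Finset.exists_ne_zero_of_sum_ne_zero
            (s := Finset.univ.erase w₁) (f := fun w => N v w)
            (show (∑ w ∈ Finset.univ.erase w₁, N v w) ≠ 0 by omega)
          exact ⟨w₁, w₂, (Finset.ne_of_mem_erase hw₂mem).symm, by omega, by omega⟩
        obtain ⟨w₁, w₂, hne, h1, h2'⟩ := h2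
        obtain ⟨n₁, hn₁⟩ := exists_pow_pos_of_rtg k N w₁ v (hconn w₁ v)
        obtain ⟨n₂, hn₂⟩ := exists_pow_pos_of_rtg k N w₂ v (hconn w₂ v)
        -- closed walk of length 1 + P through both w₁ and w₂
        set P := n₁ + 1 + n₂ with hPdef
        refine ⟨1 + P, by omega, ?_⟩
        have c1 : 1 ≤ (N ^ (1 + n₂)) v v :=
          le_trans (by calc 1 ≤ N v w₂ * (N ^ n₂) w₂ v := Nat.one_le_iff_ne_zero.2 (by positivity)
              _ = (N ^ 1) v w₂ * (N ^ n₂) w₂ v := by rw [pow_one])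
            (pow_entry_le k N 1 n₂ v w₂ v)
        have c2 : 1 ≤ (N ^ (1 + n₁)) v v :=
          le_trans (by calc 1 ≤ N v w₁ * (N ^ n₁) w₁ v := Nat.one_le_iff_ne_zero.2 (by positivity)
              _ = (N ^ 1) v w₁ * (N ^ n₁) w₁ v := by rw [pow_one])
            (pow_entry_le k N 1 n₁ v w₁ v)
        have e1 : 1 ≤ (N ^ P) w₁ v := by
          have h' : (N ^ n₁) w₁ v * (N ^ (1 + n₂)) v v ≤ (N ^ (n₁ + (1 + n₂))) w₁ v :=
            pow_entry_le k N n₁ (1 + n₂) w₁ v v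
          have heq : n₁ + (1 + n₂) = P := by omega
          rw [heq] at h'
          exact le_trans (Nat.one_le_iff_ne_zero.2 (by positivity)) h'
        have e2 : 1 ≤ (N ^ P) w₂ v := by
          have h' : (N ^ n₂) w₂ v * (N ^ (1 + n₁)) v v ≤ (N ^ (n₂ + (1 + n₁))) w₂ v :=
            pow_entry_le k N n₂ (1 + n₁) w₂ v v
          have heq : n₂ + (1 + n₁) = P := by omega
          rw [heq] at h'
          exact le_trans (Nat.one_le_iff_ne_zero.2 (by positivity)) h'
        have hexp : (N ^ (1 + P)) v v = ∑ x, N v x * (N ^ P) x v := by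
          rw [pow_add, pow_one, Matrix.mul_apply]
        rw [hexp]
        calc (2:ℕ) = 1 * 1 + 1 * 1 := by ring
        _ ≤ N v w₁ * (N ^ P) w₁ v + N v w₂ * (N ^ P) w₂ v :=
            Nat.add_le_add (Nat.mul_le_mul h1 e1) (Nat.mul_le_mul h2' e2)
        _ = ∑ x ∈ {w₁, w₂}, N v x * (N ^ P) x v :=
            (Finset.sum_pair (f := fun x => N v x * (N ^ P) x v) hne).symm
        _ ≤ ∑ x, N v x * (N ^ P) x v :=
            Finset.sum_le_sum_of_subset (Finset.subset_univ _)
    obtain ⟨L, hL1, hL2⟩ := hL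
    -- growth: 2^m ≤ (N^(L*m)) v v
    have growth : ∀ m : ℕ, 2 ^ m ≤ (N ^ (L * m)) v v := by
      intro m
      induction m with
      | zero => simp [Matrix.one_apply]
      | succ m ih =>
        calc 2 ^ (m + 1) = 2 ^ m * 2 := by ring
        _ ≤ (N ^ (L * m)) v v * (N ^ L) v v := Nat.mul_le_mul ih hL2
        _ ≤ (N ^ (L * m + L)) v v := pow_entry_le k N (L * m) L v v v
        _ = (N ^ (L * (m + 1))) v v := by rw [show L * (m + 1) = L * m + L by ring]
    -- spectral contradiction via Gelfand's formula
    haveI : Nonempty (Fin k) := ⟨v⟩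
    set A := N.map (Nat.cast : ℕ → ℂ) with hA
    have hmap : ∀ n : ℕ, A ^ n = (N ^ n).map (Nat.cast : ℕ → ℂ) := by
      intro n
      have h0 : A = (Nat.castRingHom ℂ).mapMatrix N := rfl
      rw [h0, ← map_pow]
      rfl
    have hnorm : ∀ m : ℕ, ((2:ℝ≥0)) ^ m ≤ ‖A ^ (L * m)‖₊ := by
      intro m
      have hentry : ‖(A ^ (L * m)) v v‖₊ ≤ ‖A ^ (L * m)‖₊ := by
        rw [Matrix.linfty_opNNNorm_def]
        refine le_trans ?_ (Finset.le_sup (Finset.mem_univ v))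
        exact Finset.single_le_sum (f := fun j => ‖(A ^ (L * m)) v j‖₊)
          (fun _ _ => zero_le) (Finset.mem_univ v)
      refine le_trans ?_ hentry
      rw [hmap]
      simp only [Matrix.map_apply]
      rw [RCLike.nnnorm_natCast]
      calc ((2:ℝ≥0)) ^ m = ((2 ^ m : ℕ) : ℝ≥0) := by push_cast; ring
      _ ≤ _ := by exact_mod_cast growth m
    have gelfand := spectrum.pow_nnnorm_pow_one_div_tendsto_nhds_spectralRadius A
    have hLm : Tendsto (fun m : ℕ => L * m) atTop atTop :=
      tendsto_atTop_atTop.2 fun b => ⟨b, fun a ha =>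
        le_trans ha (Nat.le_mul_of_pos_left a hL1)⟩
    have hsub : Tendsto (fun m : ℕ => (‖A ^ (L * m)‖₊ : ℝ≥0∞) ^ (1 / ((L * m : ℕ)) : ℝ))
        atTop (𝓝 (spectralRadius ℂ A)) := gelfand.comp hLm
    have hlow : ∀ᶠ m : ℕ in atTop, (2:ℝ≥0∞) ^ ((1:ℝ) / L) ≤
        (‖A ^ (L * m)‖₊ : ℝ≥0∞) ^ (1 / ((L * m : ℕ)) : ℝ) := by
      filter_upwards [eventually_ge_atTop 1] with m hm
      have hexp : (0:ℝ) ≤ 1 / ((L * m : ℕ) : ℝ) := by positivity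
      have hb : ((2:ℝ≥0∞)) ^ (m : ℝ) ≤ (‖A ^ (L * m)‖₊ : ℝ≥0∞) := by
        rw [ENNReal.rpow_natCast]
        calc ((2:ℝ≥0∞)) ^ m = ((((2:ℝ≥0)) ^ m : ℝ≥0) : ℝ≥0∞) := by push_cast; ring
        _ ≤ _ := ENNReal.coe_le_coe.2 (hnorm m)
      have h1 : (((2:ℝ≥0∞)) ^ (m:ℝ)) ^ (1 / ((L * m : ℕ)) : ℝ) ≤
          (‖A ^ (L * m)‖₊ : ℝ≥0∞) ^ (1 / ((L * m : ℕ)) : ℝ) :=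
        ENNReal.rpow_le_rpow hb hexp
      refine le_trans (le_of_eq ?_) h1
      rw [← ENNReal.rpow_mul]
      congr 1
      have hm' : (m : ℝ) ≠ 0 := Nat.cast_ne_zero.2 (by omega)
      have hLr : (L : ℝ) ≠ 0 := Nat.cast_ne_zero.2 (by omega)
      rw [Nat.cast_mul]
      field_simp
      
    have hge : (2:ℝ≥0∞) ^ ((1:ℝ) / L) ≤ spectralRadius ℂ A := ge_of_tendsto hsub hlow
    have hgt : (1:ℝ≥0∞) < (2:ℝ≥0∞) ^ ((1:ℝ) / L) :=
      ENNReal.one_lt_rpow one_lt_two (by positivity)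
    exact absurd (le_trans hge hρ) (not_le.2 hgt)
  -- Step 2: successor is unique, so sequences are determined by their first vertex
  have uniq : ∀ v w w' : Fin k, 0 < N v w → 0 < N v w' → w = w' := by
    intro v w w' hw hw'
    by_contra hne
    have h2 : 2 ≤ ∑ x, N v x := by
      calc 2 ≤ N v w + N v w' := by omega
      _ = ∑ x ∈ {w, w'}, N v x := (Finset.sum_pair (f := fun x => N v x) hne).symm
      _ ≤ ∑ x, N v x := Finset.sum_le_sum_of_subset (Finset.subset_univ _)
    exact absurd (h2.trans (key v)) (by norm_num)
  apply Set.Finite.of_finite_image (f := fun f => f 0)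
  · exact Set.Finite.subset (Set.finite_univ) (Set.subset_univ _)
  · intro f hf g hg h0
    funext m
    induction m with
    | zero => exact h0
    | succ m ih =>
      exact uniq (f m) (f (m + 1)) (g (m + 1)) (hf m) (by rw [ih]; exact hg m)
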